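/- Fix c₁ > 0 and c₀ ∈ ℝ, and let U⁺ := { s ∈ ℂ : Im s > 0 and Im J_{c₁,c₀}(s) > 0 }. Then J_{c₁,c₀} is injective on U⁺ and its image J_{c₁,c₀}(U⁺) equals the open upper half plane { z ∈ ℂ : Im z > 0 }. -/

import Mathlib

/-- The map `J_{c₁,c₀}(s) = c₁·s + c₀ − Log((s − 1/2)/(s + 1/2))`, with the principal branch of
the complex logarithm. -/
noncomputable def Jmap (c₁ c₀ : ℝ) (s : ℂ) : ℂ :=
  c₁ * s + c₀ - Complex.log ((s - 1/2) / (s + 1/2))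

open Complex Real

noncomputable def Mob (s : ℂ) : ℂ := (s - 1/2) / (s + 1/2)
noncomputable def rhosq (a b : ℂ) : ℝ := Complex.normSq (a - b) / (4 * (a.im * b.im))

lemma mob_im (s : ℂ) : (Mob s).im = s.im / Complex.normSq (s + 1/2) := by
  unfold Mob
  rw [Complex.div_im]
  simp [Complex.add_re, Complex.sub_re, Complex.add_im, Complex.sub_im]
  ring

lemma ne_half (s : ℂ) (hs : 0 < s.im) : s + 1/2 ≠ 0 := by
  intro h
  have : (s + 1/2).im = 0 := by rw [h]; simp
  simp [Complex.add_im] at this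
  linarith

lemma mob_im_pos {s : ℂ} (hs : 0 < s.im) : 0 < (Mob s).im := by
  rw [mob_im]
  exact div_pos hs (Complex.normSq_pos.mpr (ne_half s hs))

lemma mob_inj {s₁ s₂ : ℂ} (h1 : 0 < s₁.im) (h2 : 0 < s₂.im) (h : Mob s₁ = Mob s₂) :
    s₁ = s₂ := by
  unfold Mob at h
  rw [div_eq_div_iff (ne_half s₁ h1) (ne_half s₂ h2)] at h
  have : s₁ - s₂ = 0 := by linear_combination h
  exact sub_eq_zero.mp this

lemma mob_diff {s₁ s₂ : ℂ} (h1 : 0 < s₁.im) (h2 : 0 < s₂.im) :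
    Mob s₁ - Mob s₂ = (s₁ - s₂) / ((s₁ + 1/2) * (s₂ + 1/2)) := by
  unfold Mob
  rw [div_sub_div _ _ (ne_half s₁ h1) (ne_half s₂ h2)]
  congr 1
  ring

lemma rhosq_mob {s₁ s₂ : ℂ} (h1 : 0 < s₁.im) (h2 : 0 < s₂.im) :
    rhosq (Mob s₁) (Mob s₂) = rhosq s₁ s₂ := by
  have n1 : Complex.normSq (s₁ + 1/2) ≠ 0 := (Complex.normSq_pos.mpr (ne_half s₁ h1)).ne'
  have n2 : Complex.normSq (s₂ + 1/2) ≠ 0 := (Complex.normSq_pos.mpr (ne_half s₂ h2)).ne'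
  unfold rhosq
  rw [mob_diff h1 h2, mob_im, mob_im, Complex.normSq_div, Complex.normSq_mul]
  set A := Complex.normSq (s₁ + 1/2) with hA
  set B := Complex.normSq (s₂ + 1/2) with hB
  field_simp

lemma arg_bounds {w : ℂ} (hw : 0 < w.im) : 0 < w.arg ∧ w.arg < π := by
  constructor
  · rcases lt_or_eq_of_le (Complex.arg_nonneg_iff.mpr hw.le) with h | h
    · exact h
    · exfalso
      have := Complex.arg_eq_zero_iff.mp h.symm
      linarith [this.2]
  · rcases lt_or_eq_of_le (Complex.arg_le_pi w) with h | h
    · exact h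
    · exfalso
      have := Complex.arg_eq_pi_iff.mp h
      linarith [this.2]

/-- the affine map sending `u = log w` to `s`. -/
noncomputable def Sm (c₁ c₀ : ℝ) (z w : ℂ) : ℂ := (z - c₀ + Complex.log w) / c₁

noncomputable def Pm (c₁ c₀ : ℝ) (z w : ℂ) : ℂ := Mob (Sm c₁ c₀ z w)

lemma Sm_im (c₁ c₀ : ℝ) (hc₁ : 0 < c₁) (z w : ℂ) :
    (Sm c₁ c₀ z w).im = (z.im + w.arg) / c₁ := by
  unfold Sm
  rw [Complex.div_im]
  simp [Complex.normSq_ofReal, Complex.log_im]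
  field_simp

lemma Sm_im_pos {c₁ c₀ : ℝ} (hc₁ : 0 < c₁) {z w : ℂ} (hz : 0 < z.im) (hw : 0 < w.im) :
    0 < (Sm c₁ c₀ z w).im := by
  rw [Sm_im c₁ c₀ hc₁]
  exact div_pos (by linarith [(arg_bounds hw).1]) hc₁

lemma Pm_im_pos {c₁ c₀ : ℝ} (hc₁ : 0 < c₁) {z w : ℂ} (hz : 0 < z.im) (hw : 0 < w.im) :
    0 < (Pm c₁ c₀ z w).im :=
  mob_im_pos (Sm_im_pos hc₁ hz hw)

lemma rhosq_Sm {c₁ c₀ : ℝ} (hc₁ : 0 < c₁) (z : ℂ) (w₁ w₂ : ℂ) :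
    rhosq (Sm c₁ c₀ z w₁) (Sm c₁ c₀ z w₂)
      = Complex.normSq (Complex.log w₁ - Complex.log w₂)
        / (4 * ((z.im + w₁.arg) * (z.im + w₂.arg))) := by
  unfold rhosq
  rw [Sm_im c₁ c₀ hc₁, Sm_im c₁ c₀ hc₁]
  have : Sm c₁ c₀ z w₁ - Sm c₁ c₀ z w₂ = (Complex.log w₁ - Complex.log w₂) / c₁ := by
    unfold Sm; rw [div_sub_div_same]; ring_nf
  rw [this, Complex.normSq_div]
  have hn : Complex.normSq (c₁ : ℂ) = c₁ ^ 2 := by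
    simp [Complex.normSq_ofReal]; ring
  have h2 : (c₁:ℝ) ^ 2 ≠ 0 := pow_ne_zero 2 hc₁.ne'
  have hd : 4 * ((z.im + w₁.arg) / c₁ * ((z.im + w₂.arg) / c₁))
      = 4 * ((z.im + w₁.arg) * (z.im + w₂.arg)) / c₁ ^ 2 := by
    rw [div_mul_div_comm]; ring
  rw [hn, hd, div_div]
  have hcan : (c₁ ^ 2 : ℝ) * (4 * ((z.im + w₁.arg) * (z.im + w₂.arg)) / c₁ ^ 2)
      = 4 * ((z.im + w₁.arg) * (z.im + w₂.arg)) := by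
    field_simp
  rw [hcan]


lemma sq_le_sinh_sq (x : ℝ) : x ^ 2 ≤ Real.sinh x ^ 2 := by
  rcases le_total 0 x with h | h
  · have := Real.self_le_sinh_iff.mpr h
    nlinarith
  · have h' : 0 ≤ -x := by linarith
    have := Real.self_le_sinh_iff.mpr h'
    rw [Real.sinh_neg] at this
    nlinarith

lemma sin_lin_bound {β θ : ℝ} (hβ : 0 < β) (h0 : 0 ≤ θ) (hπ : θ ≤ π) :
    Real.sin θ * (π + β) ≤ π * (β + θ) := by
  have h1 : Real.sin θ ≤ θ := Real.sin_le h0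
  have h2 : Real.sin θ ≤ 1 := Real.sin_le_one θ
  nlinarith [Real.pi_gt_three]

lemma conc_sin {a b : ℝ} (ha : 0 ≤ a) (hab : a ≤ b) (hb : b ≤ π) :
    a * Real.sin b ≤ b * Real.sin a := by
  rcases eq_or_lt_of_le (ha.trans hab) with h | hbpos
  · have ha' : a = 0 := le_antisymm (hab.trans h.symm.le) ha
    simp [← h, ha']
  · have ht : a / b ∈ Set.Icc (0:ℝ) 1 := by
      constructor
      · positivity
      · exact div_le_one_of_le₀ hab hbpos.le
    have key := strictConcaveOn_sin_Icc.concaveOn.2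
      (Set.mem_Icc.mpr ⟨hbpos.le, hb⟩) (Set.mem_Icc.mpr ⟨le_rfl, Real.pi_pos.le⟩)
      ht.1 (by linarith [ht.2] : (0:ℝ) ≤ 1 - a / b) (by ring : a / b + (1 - a / b) = 1)
    simp only [smul_eq_mul, mul_zero, add_zero, Real.sin_zero] at key
    have : a / b * b = a := div_mul_cancel₀ a hbpos.ne'
    rw [this] at key
    calc a * Real.sin b = (a / b * Real.sin b) * b := by
          field_simp
        _ ≤ Real.sin a * b := by
          apply mul_le_mul_of_nonneg_right _ hbpos.le
          linarith
        _ = b * Real.sin a := by ring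

lemma sin_prod_ident (m y : ℝ) :
    Real.sin (m + y) * Real.sin (m - y) = Real.sin m ^ 2 - Real.sin y ^ 2 := by
  rw [Real.sin_add, Real.sin_sub]
  have p1 := Real.sin_sq_add_cos_sq m
  have p2 := Real.sin_sq_add_cos_sq y
  nlinarith [p1, p2]

lemma sq_le_sq_add {a b : ℝ} (ha : 0 < a) (hb : 0 < b) : a ^ 2 ≤ (a + b) ^ 2 := by
  nlinarith

lemma keyineq {β x θ₁ θ₂ : ℝ} (hβ : 0 < β) (h1 : 0 < θ₁) (h1' : θ₁ < π)
    (h2 : 0 < θ₂) (h2' : θ₂ < π) :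
    (x ^ 2 + ((θ₁ - θ₂) / 2) ^ 2) * (Real.sin θ₁ * Real.sin θ₂) * (π + β) ^ 2
      ≤ π ^ 2 * (Real.sinh x ^ 2 + Real.sin ((θ₁ - θ₂) / 2) ^ 2)
        * ((β + θ₁) * (β + θ₂)) := by
  set y := (θ₁ - θ₂) / 2 with hy
  set m := (θ₁ + θ₂) / 2 with hm
  have hθ1 : θ₁ = m + y := by rw [hy, hm]; ring
  have hθ2 : θ₂ = m - y := by rw [hy, hm]; ring
  have hs1 : 0 ≤ Real.sin θ₁ := Real.sin_nonneg_of_nonneg_of_le_pi h1.le h1'.le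
  have hs2 : 0 ≤ Real.sin θ₂ := Real.sin_nonneg_of_nonneg_of_le_pi h2.le h2'.le
  have hπ : (0:ℝ) < π := Real.pi_pos
  set S := Real.sin θ₁ * Real.sin θ₂ with hS
  set B := (β + θ₁) * (β + θ₂) with hB
  -- part (a)
  have e1 : Real.sin θ₁ * (π + β) ≤ π * (β + θ₁) := sin_lin_bound hβ h1.le h1'.le
  have e2 : Real.sin θ₂ * (π + β) ≤ π * (β + θ₂) := sin_lin_bound hβ h2.le h2'.le
  have prodbound : S * (π + β) ^ 2 ≤ π ^ 2 * B := by
    calc S * (π + β) ^ 2 = (Real.sin θ₁ * (π + β)) * (Real.sin θ₂ * (π + β)) := by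
          rw [hS]; ring
      _ ≤ (π * (β + θ₁)) * (π * (β + θ₂)) :=
          mul_le_mul e1 e2 (mul_nonneg hs2 (by positivity)) (by positivity)
      _ = π ^ 2 * B := by rw [hB]; ring
  have hSnn : 0 ≤ S * (π + β) ^ 2 := mul_nonneg (mul_nonneg hs1 hs2) (sq_nonneg _)
  have pa : x ^ 2 * (S * (π + β) ^ 2) ≤ Real.sinh x ^ 2 * (π ^ 2 * B) :=
    mul_le_mul (sq_le_sinh_sq x) prodbound hSnn (sq_nonneg _)
  -- part (b)
  have hym : |y| ≤ m := by
    rw [abs_le]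
    constructor
    · rw [hy, hm]; linarith
    · rw [hy, hm]; linarith
  have hmπ : m ≤ π := by rw [hm]; linarith
  have hmge : 0 ≤ m := by rw [hm]; positivity
  have hconc := conc_sin (abs_nonneg y) hym hmπ
  have hsabs : Real.sin |y| = |Real.sin y| := by
    rcases le_total 0 y with h | h
    · rw [_root_.abs_of_nonneg h, _root_.abs_of_nonneg
        (Real.sin_nonneg_of_nonneg_of_le_pi h (by rw [hy]; linarith))]
    · have hsy : Real.sin y ≤ 0 := by
        have h0 : 0 ≤ Real.sin (-y) := Real.sin_nonneg_of_nonneg_of_le_pi (by linarith)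
          (by rw [hy]; linarith)
        rw [Real.sin_neg] at h0; linarith
      rw [_root_.abs_of_nonpos h, _root_.abs_of_nonpos hsy, Real.sin_neg]
  have hsq : y ^ 2 * Real.sin m ^ 2 ≤ m ^ 2 * Real.sin y ^ 2 := by
    have h0 : 0 ≤ Real.sin m := Real.sin_nonneg_of_nonneg_of_le_pi hmge hmπ
    rw [hsabs] at hconc
    have h4 : 0 ≤ |y| * Real.sin m := mul_nonneg (abs_nonneg _) h0
    have hsq' : (|y| * Real.sin m) ^ 2 ≤ (m * |Real.sin y|) ^ 2 :=
      pow_le_pow_left₀ h4 hconc 2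
    calc y ^ 2 * Real.sin m ^ 2 = (|y| * Real.sin m) ^ 2 := by
          rw [mul_pow, _root_.sq_abs]
      _ ≤ (m * |Real.sin y|) ^ 2 := hsq'
      _ = m ^ 2 * Real.sin y ^ 2 := by rw [mul_pow, _root_.sq_abs]
  have hmk : m * (π + β) ≤ π * (β + m) := by
    have h5 : m * β ≤ π * β := mul_le_mul_of_nonneg_right hmπ hβ.le
    nlinarith [h5]
  have hmb : (m * (π + β)) ^ 2 ≤ (π * (β + m)) ^ 2 := by
    have h6 : 0 ≤ m * (π + β) := mul_nonneg hmge (by positivity)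
    exact pow_le_pow_left₀ h6 hmk 2
  have key2 : y ^ 2 * Real.sin m ^ 2 * (π + β) ^ 2
      ≤ π ^ 2 * (β + m) ^ 2 * Real.sin y ^ 2 := by
    calc y ^ 2 * Real.sin m ^ 2 * (π + β) ^ 2
        ≤ m ^ 2 * Real.sin y ^ 2 * (π + β) ^ 2 :=
          mul_le_mul_of_nonneg_right hsq (sq_nonneg _)
      _ = Real.sin y ^ 2 * (m * (π + β)) ^ 2 := by ring
      _ ≤ Real.sin y ^ 2 * (π * (β + m)) ^ 2 :=
          mul_le_mul_of_nonneg_left hmb (sq_nonneg _)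
      _ = π ^ 2 * (β + m) ^ 2 * Real.sin y ^ 2 := by ring
  have hsm : S = Real.sin m ^ 2 - Real.sin y ^ 2 := by
    rw [hS, hθ1, hθ2]; exact sin_prod_ident m y
  have hbm : B = (β + m) ^ 2 - y ^ 2 := by rw [hB, hθ1, hθ2]; ring
  have h3 : π ^ 2 * (y ^ 2 * Real.sin y ^ 2) ≤ (π + β) ^ 2 * (y ^ 2 * Real.sin y ^ 2) := by
    exact mul_le_mul_of_nonneg_right (sq_le_sq_add hπ hβ) (by positivity)
  have pb : y ^ 2 * (S * (π + β) ^ 2) ≤ Real.sin y ^ 2 * (π ^ 2 * B) := by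
    rw [hsm, hbm]
    have e7 : y ^ 2 * ((Real.sin m ^ 2 - Real.sin y ^ 2) * (π + β) ^ 2)
        = y ^ 2 * Real.sin m ^ 2 * (π + β) ^ 2 - (π + β) ^ 2 * (y ^ 2 * Real.sin y ^ 2) := by
      ring
    have e8 : Real.sin y ^ 2 * (π ^ 2 * ((β + m) ^ 2 - y ^ 2))
        = π ^ 2 * (β + m) ^ 2 * Real.sin y ^ 2 - π ^ 2 * (y ^ 2 * Real.sin y ^ 2) := by
      ring
    rw [e7, e8]
    linarith [key2, h3]
  calc (x ^ 2 + y ^ 2) * S * (π + β) ^ 2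
      = x ^ 2 * (S * (π + β) ^ 2) + y ^ 2 * (S * (π + β) ^ 2) := by ring
    _ ≤ Real.sinh x ^ 2 * (π ^ 2 * B) + Real.sin y ^ 2 * (π ^ 2 * B) := add_le_add pa pb
    _ = π ^ 2 * (Real.sinh x ^ 2 + Real.sin y ^ 2) * B := by ring



lemma normSq_exp_sub (v : ℂ) :
    Complex.normSq (Complex.exp v - Complex.exp (-v))
      = 4 * (Real.sinh v.re ^ 2 + Real.sin v.im ^ 2) := by
  rw [Complex.normSq_apply]
  rw [Complex.sub_re, Complex.sub_im, Complex.exp_re, Complex.exp_im,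
    Complex.exp_re, Complex.exp_im, Complex.neg_re, Complex.neg_im,
    Real.cos_neg, Real.sin_neg, Real.sinh_eq]
  have h1 : Real.exp v.re * Real.exp (-v.re) = 1 := by
    rw [← Real.exp_add]; simp
  have p2 := Real.sin_sq_add_cos_sq v.im
  nlinarith [h1, p2]

lemma rhosq_exp {w₁ w₂ : ℂ} (h1 : 0 < w₁.im) (h2 : 0 < w₂.im) :
    rhosq w₁ w₂
      = (Real.sinh (((Complex.log w₁).re - (Complex.log w₂).re) / 2) ^ 2
          + Real.sin ((w₁.arg - w₂.arg) / 2) ^ 2)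
        / (Real.sin w₁.arg * Real.sin w₂.arg) := by
  have hw1 : w₁ ≠ 0 := by intro h; rw [h] at h1; simp at h1
  have hw2 : w₂ ≠ 0 := by intro h; rw [h] at h2; simp at h2
  set u₁ := Complex.log w₁ with hu1
  set u₂ := Complex.log w₂ with hu2
  set v := (u₁ - u₂) / 2 with hv
  set a := (u₁ + u₂) / 2 with ha
  have hexp1 : w₁ = Complex.exp u₁ := (Complex.exp_log hw1).symm
  have hexp2 : w₂ = Complex.exp u₂ := (Complex.exp_log hw2).symm
  have hdiff : w₁ - w₂ = Complex.exp a * (Complex.exp v - Complex.exp (-v)) := by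
    rw [hexp1, hexp2, mul_sub, ← Complex.exp_add, ← Complex.exp_add]
    congr 1 <;> congr 1 <;> (rw [ha, hv]; ring)
  have him1 : w₁.im = Real.exp u₁.re * Real.sin u₁.im := by
    rw [hexp1, Complex.exp_im]
  have him2 : w₂.im = Real.exp u₂.re * Real.sin u₂.im := by
    rw [hexp2, Complex.exp_im]
  have harg1 : u₁.im = w₁.arg := Complex.log_im w₁
  have harg2 : u₂.im = w₂.arg := Complex.log_im w₂
  unfold rhosq
  rw [hdiff, Complex.normSq_mul, normSq_exp_sub]
  have hare : a.re = (u₁.re + u₂.re) / 2 := by rw [ha]; simp [Complex.add_re]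
  have hnsa : Complex.normSq (Complex.exp a) = Real.exp u₁.re * Real.exp u₂.re := by
    rw [Complex.normSq_eq_norm_sq, Complex.norm_exp, hare, sq, ← Real.exp_add, ← Real.exp_add]
    congr 1
    ring
  rw [hnsa, him1, him2]
  have hvre : v.re = (u₁.re - u₂.re) / 2 := by rw [hv]; simp [Complex.sub_re]
  have hvim : v.im = (w₁.arg - w₂.arg) / 2 := by
    rw [hv]; simp [Complex.sub_im]; rw [harg1, harg2]
  rw [hvre, hvim, harg1, harg2]
  have hE1 : (0:ℝ) < Real.exp u₁.re := Real.exp_pos _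
  have hE2 : (0:ℝ) < Real.exp u₂.re := Real.exp_pos _
  have hargb1 : 0 < w₁.arg ∧ w₁.arg < π := by
    constructor
    · rcases lt_or_eq_of_le (Complex.arg_nonneg_iff.mpr h1.le) with h | h
      · exact h
      · exact absurd (Complex.arg_eq_zero_iff.mp h.symm).2 h1.ne'
    · rcases lt_or_eq_of_le (Complex.arg_le_pi w₁) with h | h
      · exact h
      · exact absurd (Complex.arg_eq_pi_iff.mp h).2 h1.ne'
  have hargb2 : 0 < w₂.arg ∧ w₂.arg < π := by
    constructor
    · rcases lt_or_eq_of_le (Complex.arg_nonneg_iff.mpr h2.le) with h | h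
      · exact h
      · exact absurd (Complex.arg_eq_zero_iff.mp h.symm).2 h2.ne'
    · rcases lt_or_eq_of_le (Complex.arg_le_pi w₂) with h | h
      · exact h
      · exact absurd (Complex.arg_eq_pi_iff.mp h).2 h2.ne'
  have hsp1 : 0 < Real.sin w₁.arg := Real.sin_pos_of_pos_of_lt_pi hargb1.1 hargb1.2
  have hsp2 : 0 < Real.sin w₂.arg := Real.sin_pos_of_pos_of_lt_pi hargb2.1 hargb2.2
  field_simp

lemma key_real {β X Y θ₁ θ₂ : ℝ} (hβ : 0 < β) (h1 : 0 < θ₁) (h1' : θ₁ < π)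
    (h2 : 0 < θ₂) (h2' : θ₂ < π) (hY : Y = (θ₁ - θ₂) / 2) :
    4 * (X ^ 2 + Y ^ 2) / (4 * ((β + θ₁) * (β + θ₂)))
      ≤ (π / (π + β)) ^ 2
        * ((Real.sinh X ^ 2 + Real.sin Y ^ 2) / (Real.sin θ₁ * Real.sin θ₂)) := by
  have hπ : (0:ℝ) < π := Real.pi_pos
  have hBpos : 0 < (β + θ₁) * (β + θ₂) := mul_pos (by linarith) (by linarith)
  have hSpos : 0 < Real.sin θ₁ * Real.sin θ₂ :=
    mul_pos (Real.sin_pos_of_pos_of_lt_pi h1 h1') (Real.sin_pos_of_pos_of_lt_pi h2 h2')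
  rw [mul_div_mul_left _ _ (by norm_num : (4:ℝ) ≠ 0)]
  rw [div_pow, div_mul_div_comm, div_le_div_iff₀ hBpos (by positivity)]
  have hkey := keyineq (β := β) (x := X) hβ h1 h1' h2 h2'
  rw [← hY] at hkey
  calc (X ^ 2 + Y ^ 2) * ((π + β) ^ 2 * (Real.sin θ₁ * Real.sin θ₂))
      = (X ^ 2 + Y ^ 2) * (Real.sin θ₁ * Real.sin θ₂) * (π + β) ^ 2 := by ring
    _ ≤ π ^ 2 * (Real.sinh X ^ 2 + Real.sin Y ^ 2) * ((β + θ₁) * (β + θ₂)) := hkey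
    _ = π ^ 2 * (Real.sinh X ^ 2 + Real.sin Y ^ 2) * ((β + θ₁) * (β + θ₂)) := rfl

lemma key_sq {c₁ c₀ : ℝ} (hc₁ : 0 < c₁) {z w₁ w₂ : ℂ} (hz : 0 < z.im)
    (h1 : 0 < w₁.im) (h2 : 0 < w₂.im) :
    rhosq (Pm c₁ c₀ z w₁) (Pm c₁ c₀ z w₂) ≤ (π / (π + z.im)) ^ 2 * rhosq w₁ w₂ := by
  have hb1 := arg_bounds h1
  have hb2 := arg_bounds h2
  have e0 : rhosq (Pm c₁ c₀ z w₁) (Pm c₁ c₀ z w₂)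
      = rhosq (Sm c₁ c₀ z w₁) (Sm c₁ c₀ z w₂) :=
    rhosq_mob (Sm_im_pos hc₁ hz h1) (Sm_im_pos hc₁ hz h2)
  have hrw : Complex.normSq (Complex.log w₁ - Complex.log w₂)
      = 4 * ((((Complex.log w₁).re - (Complex.log w₂).re) / 2) ^ 2
          + ((w₁.arg - w₂.arg) / 2) ^ 2) := by
    rw [Complex.normSq_apply, Complex.sub_re, Complex.sub_im, Complex.log_im,
      Complex.log_im]
    ring
  rw [e0, rhosq_Sm hc₁, rhosq_exp h1 h2, hrw]
  exact key_real hz hb1.1 hb1.2 hb2.1 hb2.2 rfl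

lemma fixed_of_sol {c₁ c₀ : ℝ} (hc₁ : 0 < c₁) {s z : ℂ} (hs : 0 < s.im)
    (hJ : Jmap c₁ c₀ s = z) : Sm c₁ c₀ z (Mob s) = s ∧ Pm c₁ c₀ z (Mob s) = Mob s := by
  have hc : (c₁ : ℂ) ≠ 0 := by
    simpa using Complex.ofReal_ne_zero.mpr hc₁.ne'
  have hlog : Complex.log (Mob s) = c₁ * s + c₀ - z := by
    unfold Jmap at hJ
    unfold Mob
    linear_combination -hJ
  have hS : Sm c₁ c₀ z (Mob s) = s := by
    unfold Sm
    rw [hlog]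
    field_simp
    ring
  exact ⟨hS, by unfold Pm; rw [hS]⟩

lemma sol_of_fixed {c₁ c₀ : ℝ} (hc₁ : 0 < c₁) {w z : ℂ} (hw : 0 < w.im) (hz : 0 < z.im)
    (hfix : Pm c₁ c₀ z w = w) :
    0 < (Sm c₁ c₀ z w).im ∧ Jmap c₁ c₀ (Sm c₁ c₀ z w) = z := by
  have hc : (c₁ : ℂ) ≠ 0 := by
    simpa using Complex.ofReal_ne_zero.mpr hc₁.ne'
  have hsim : 0 < (Sm c₁ c₀ z w).im := Sm_im_pos hc₁ hz hw
  refine ⟨hsim, ?_⟩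
  have hMob : (Sm c₁ c₀ z w - 1/2) / (Sm c₁ c₀ z w + 1/2) = w := hfix
  unfold Jmap
  rw [hMob]
  unfold Sm
  field_simp
  ring

lemma fixed_unique {c₁ c₀ : ℝ} (hc₁ : 0 < c₁) {z w₁ w₂ : ℂ} (hz : 0 < z.im)
    (h1 : 0 < w₁.im) (h2 : 0 < w₂.im)
    (hf1 : Pm c₁ c₀ z w₁ = w₁) (hf2 : Pm c₁ c₀ z w₂ = w₂) : w₁ = w₂ := by
  have hπ : (0:ℝ) < π := Real.pi_pos
  have hk : (π / (π + z.im)) ^ 2 < 1 := by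
    have : π / (π + z.im) < 1 := (div_lt_one (by linarith)).mpr (by linarith)
    nlinarith [div_nonneg hπ.le (by linarith : (0:ℝ) ≤ π + z.im)]
  have hkey := key_sq (c₀ := c₀) hc₁ hz h1 h2
  rw [hf1, hf2] at hkey
  have hnn : 0 ≤ rhosq w₁ w₂ :=
    div_nonneg (Complex.normSq_nonneg _) (by positivity)
  have hzero : rhosq w₁ w₂ = 0 := by nlinarith [hkey, hnn, hk]
  have hden : (0:ℝ) < 4 * (w₁.im * w₂.im) := by positivity
  have : Complex.normSq (w₁ - w₂) = 0 := by
    unfold rhosq at hzero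
    exact (div_eq_zero_iff.mp hzero).resolve_right hden.ne'
  have := Complex.normSq_eq_zero.mp this
  exact sub_eq_zero.mp this

noncomputable def rho (a b : ℂ) : ℝ := Real.sqrt (rhosq a b)

lemma rho_nonneg (a b : ℂ) : 0 ≤ rho a b := Real.sqrt_nonneg _

lemma rho_comm (a b : ℂ) : rho a b = rho b a := by
  unfold rho rhosq
  rw [← neg_sub, Complex.normSq_neg, mul_comm a.im b.im]

lemma key_rho {c₁ c₀ : ℝ} (hc₁ : 0 < c₁) {z w₁ w₂ : ℂ} (hz : 0 < z.im)
    (h1 : 0 < w₁.im) (h2 : 0 < w₂.im) :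
    rho (Pm c₁ c₀ z w₁) (Pm c₁ c₀ z w₂) ≤ (π / (π + z.im)) * rho w₁ w₂ := by
  have hπ : (0:ℝ) < π := Real.pi_pos
  have hk0 : 0 ≤ π / (π + z.im) := div_nonneg hπ.le (by linarith)
  have := Real.sqrt_le_sqrt (key_sq (c₀ := c₀) hc₁ hz h1 h2)
  calc rho (Pm c₁ c₀ z w₁) (Pm c₁ c₀ z w₂)
      ≤ Real.sqrt ((π / (π + z.im)) ^ 2 * rhosq w₁ w₂) := this
    _ = (π / (π + z.im)) * rho w₁ w₂ := by
        rw [Real.sqrt_mul (sq_nonneg _), Real.sqrt_sq hk0]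
        rfl

lemma abs_sub_eq_rho {a b : ℂ} (ha : 0 < a.im) (hb : 0 < b.im) :
    ‖a - b‖ = 2 * Real.sqrt (a.im * b.im) * rho a b := by
  have hd : (0:ℝ) < Real.sqrt (a.im * b.im) := Real.sqrt_pos.mpr (by positivity)
  have h1 : Real.sqrt (4 * (a.im * b.im)) = 2 * Real.sqrt (a.im * b.im) := by
    rw [show (4:ℝ) * (a.im * b.im) = (2 * Real.sqrt (a.im * b.im)) ^ 2 from by
      rw [mul_pow, Real.sq_sqrt (by positivity : (0:ℝ) ≤ a.im * b.im)]; ring]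
    exact Real.sqrt_sq (by positivity)
  unfold rho rhosq
  rw [Real.sqrt_div (Complex.normSq_nonneg _), h1, ← Complex.norm_def]
  field_simp

lemma im_log_le {a b : ℂ} (ha : 0 < a.im) (hb : 0 < b.im) :
    Real.log b.im - Real.log a.im ≤ 2 * rho a b := by
  rcases le_total b.im a.im with h | h
  · have : Real.log b.im ≤ Real.log a.im := Real.log_le_log hb h
    linarith [rho_nonneg a b]
  · set p := Real.log a.im with hp
    set q := Real.log b.im with hq
    set t := (q - p) / 2 with ht
    have hepa : Real.exp p = a.im := Real.exp_log ha
    have heqb : Real.exp q = b.im := Real.exp_log hb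
    have htn : 0 ≤ t := by
      rw [ht]
      have : p ≤ q := by rw [hp, hq]; exact Real.log_le_log ha h
      linarith
    have hsinh : t ≤ Real.sinh t := Real.self_le_sinh_iff.mpr htn
    have hE : (0:ℝ) < Real.exp ((p + q) / 2) := Real.exp_pos _
    have hkey : (q - p) * Real.exp ((p + q) / 2) ≤ b.im - a.im := by
      have hexp : b.im - a.im = Real.exp ((p + q) / 2) * (Real.exp t - Real.exp (-t)) := by
        rw [mul_sub, ← Real.exp_add, ← Real.exp_add, ← heqb, ← hepa]
        congr 1 <;> (rw [ht]; ring_nf)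
      rw [hexp]
      have h2s : Real.exp t - Real.exp (-t) = 2 * Real.sinh t := by
        rw [Real.sinh_eq]; ring
      rw [h2s]
      calc (q - p) * Real.exp ((p + q) / 2) = Real.exp ((p + q) / 2) * (2 * t) := by
            rw [ht]; ring
        _ ≤ Real.exp ((p + q) / 2) * (2 * Real.sinh t) := by
            apply mul_le_mul_of_nonneg_left _ hE.le
            linarith
    have hsq : Real.exp ((p + q) / 2) = Real.sqrt (a.im * b.im) := by
      rw [Real.exp_half, ← hepa, ← heqb, ← Real.exp_add]
    have habs : b.im - a.im ≤ ‖a - b‖ := by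
      have h1 : b.im - a.im ≤ |(b - a).im| := by
        rw [Complex.sub_im]; exact le_abs_self _
      calc b.im - a.im ≤ |(b - a).im| := h1
        _ ≤ ‖b - a‖ := Complex.abs_im_le_norm _
        _ = ‖a - b‖ := by rw [← neg_sub, norm_neg]
    rw [abs_sub_eq_rho ha hb] at habs
    have hsp : (0:ℝ) < Real.sqrt (a.im * b.im) := Real.sqrt_pos.mpr (by positivity)
    rw [hsq] at hkey
    have := hkey.trans habs
    have hfin : (q - p) * Real.sqrt (a.im * b.im)
        ≤ (2 * rho a b) * Real.sqrt (a.im * b.im) := by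
      calc (q - p) * Real.sqrt (a.im * b.im) ≤ 2 * Real.sqrt (a.im * b.im) * rho a b := this
        _ = (2 * rho a b) * Real.sqrt (a.im * b.im) := by ring
    exact le_of_mul_le_mul_right hfin hsp

/-- On `U⁺ = {s : Im s > 0, Im J(s) > 0}`, the map `J_{c₁,c₀}` is injective and
its image is the open upper half plane. -/
theorem Jmap_univalent_outside
    (c₁ c₀ : ℝ) (hc₁ : 0 < c₁) :
    Set.InjOn (Jmap c₁ c₀) {s : ℂ | 0 < s.im ∧ 0 < (Jmap c₁ c₀ s).im} ∧
    Jmap c₁ c₀ '' {s : ℂ | 0 < s.im ∧ 0 < (Jmap c₁ c₀ s).im} = {z : ℂ | 0 < z.im} := by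
  constructor
  · intro s₁ hs₁ s₂ hs₂ heq
    obtain ⟨h1im, h1J⟩ := hs₁
    obtain ⟨h2im, h2J⟩ := hs₂
    have hzim : 0 < (Jmap c₁ c₀ s₁).im := h1J
    have f1 := fixed_of_sol (c₀ := c₀) (z := Jmap c₁ c₀ s₁) hc₁ h1im rfl
    have f2 := fixed_of_sol (c₀ := c₀) (z := Jmap c₁ c₀ s₁) hc₁ h2im heq.symm
    have hww := fixed_unique hc₁ hzim (mob_im_pos h1im) (mob_im_pos h2im) f1.2 f2.2
    exact mob_inj h1im h2im hww
  · ext z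
    simp only [Set.mem_image, Set.mem_setOf_eq]
    constructor
    · rintro ⟨s, ⟨him, hJ⟩, rfl⟩
      exact hJ
    · intro hz
      have hπ : (0:ℝ) < π := Real.pi_pos
      set k := π / (π + z.im) with hk
      have hk0 : 0 ≤ k := div_nonneg hπ.le (by linarith)
      have hk1 : k < 1 := (div_lt_one (by linarith)).mpr (by linarith)
      set P := Pm c₁ c₀ z with hP
      set f : ℕ → ℂ := fun n => P^[n] Complex.I with hf
      have hsucc : ∀ n, f (n + 1) = P (f n) := by
        intro n
        rw [hf]
        simp only
        rw [Function.iterate_succ_apply']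
      have him : ∀ n, 0 < (f n).im := by
        intro n
        induction n with
        | zero => rw [hf]; simp [Complex.I_im]
        | succ n ih =>
          rw [hsucc n, hP]
          exact Pm_im_pos hc₁ hz ih
      set R := rho (f 0) (f 1) with hR
      have hR0 : 0 ≤ R := rho_nonneg _ _
      clear_value R
      have hgeo : ∀ n, rho (f n) (f (n + 1)) ≤ k ^ n * R := by
        intro n
        induction n with
        | zero => simp [hR]
        | succ n ih =>
          have step := key_rho (c₀ := c₀) hc₁ hz (him n) (him (n + 1))
          rw [← hP, ← hsucc n, ← hsucc (n + 1), ← hk] at step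
          calc rho (f (n + 1)) (f (n + 1 + 1)) ≤ k * rho (f n) (f (n + 1)) := step
            _ ≤ k * (k ^ n * R) := mul_le_mul_of_nonneg_left ih hk0
            _ = k ^ (n + 1) * R := by ring
      set C := 2 * R / (1 - k) with hC
      have hC0 : 0 ≤ C := div_nonneg (by linarith) (by linarith)
      clear_value C
      have habs2 : ∀ n, |Real.log (f (n + 1)).im - Real.log (f n).im|
          ≤ 2 * rho (f n) (f (n + 1)) := by
        intro n
        rw [abs_le]
        constructor
        · have := im_log_le (him (n + 1)) (him n)
          rw [rho_comm] at this
          linarith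
        · exact im_log_le (him n) (him (n + 1))
      have hlogb : ∀ n, |Real.log (f n).im - Real.log (f 0).im|
          ≤ 2 * R * ((1 - k ^ n) / (1 - k)) := by
        intro n
        induction n with
        | zero => simp
        | succ n ih =>
          have tri : |Real.log (f (n + 1)).im - Real.log (f 0).im|
              ≤ |Real.log (f (n + 1)).im - Real.log (f n).im|
                + |Real.log (f n).im - Real.log (f 0).im| := abs_sub_le _ _ _
          have h1 : |Real.log (f (n + 1)).im - Real.log (f n).im| ≤ 2 * (k ^ n * R) := by
            calc |Real.log (f (n + 1)).im - Real.log (f n).im|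
                ≤ 2 * rho (f n) (f (n + 1)) := habs2 n
              _ ≤ 2 * (k ^ n * R) := by linarith [hgeo n]
          have hk1' : 1 - k ≠ 0 := by linarith
          have heq2 : 2 * (k ^ n * R) + 2 * R * ((1 - k ^ n) / (1 - k))
              = 2 * R * ((1 - k ^ (n + 1)) / (1 - k)) := by
            field_simp
            ring
          linarith [tri, h1, ih]
      have hlogC : ∀ n, |Real.log (f n).im - Real.log (f 0).im| ≤ C := by
        intro n
        have hkn : (0:ℝ) ≤ k ^ n := pow_nonneg hk0 n
        have hfrac : (1 - k ^ n) / (1 - k) ≤ 1 / (1 - k) := by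
          gcongr
          · linarith
        have h8 : 2 * R * ((1 - k ^ n) / (1 - k)) ≤ 2 * R * (1 / (1 - k)) :=
          mul_le_mul_of_nonneg_left hfrac (by linarith)
        have h9 : 2 * R * (1 / (1 - k)) = C := by rw [hC]; ring
        calc |Real.log (f n).im - Real.log (f 0).im|
            ≤ 2 * R * ((1 - k ^ n) / (1 - k)) := hlogb n
          _ ≤ 2 * R * (1 / (1 - k)) := h8
          _ = C := h9
      set Ub := Real.exp (Real.log (f 0).im + C) with hUb
      set Lb := Real.exp (Real.log (f 0).im - C) with hLb
      have hub : ∀ n, (f n).im ≤ Ub := by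
        intro n
        have h5 := (abs_le.mp (hlogC n)).2
        calc (f n).im = Real.exp (Real.log (f n).im) := (Real.exp_log (him n)).symm
          _ ≤ Ub := Real.exp_le_exp.mpr (by linarith)
      have hlb : ∀ n, Lb ≤ (f n).im := by
        intro n
        have h5 := (abs_le.mp (hlogC n)).1
        calc Lb ≤ Real.exp (Real.log (f n).im) := Real.exp_le_exp.mpr (by linarith)
          _ = (f n).im := Real.exp_log (him n)
      have hLb0 : 0 < Lb := Real.exp_pos _
      have hUb0 : 0 < Ub := Real.exp_pos _
      have hdist : ∀ n, dist (f n) (f (n + 1)) ≤ (2 * Ub * R) * k ^ n := by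
        intro n
        rw [Complex.dist_eq, abs_sub_eq_rho (him n) (him (n + 1))]
        have h6 : Real.sqrt ((f n).im * (f (n + 1)).im) ≤ Ub := by
          calc Real.sqrt ((f n).im * (f (n + 1)).im) ≤ Real.sqrt (Ub * Ub) := by
                apply Real.sqrt_le_sqrt
                exact mul_le_mul (hub n) (hub (n + 1)) (him (n + 1)).le hUb0.le
            _ = Ub := Real.sqrt_mul_self hUb0.le
        calc 2 * Real.sqrt ((f n).im * (f (n + 1)).im) * rho (f n) (f (n + 1))
            ≤ 2 * Ub * (k ^ n * R) := by
              apply mul_le_mul (by linarith) (hgeo n) (rho_nonneg _ _) (by positivity)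
          _ = (2 * Ub * R) * k ^ n := by ring
      have hcauchy : CauchySeq f := cauchySeq_of_le_geometric k (2 * Ub * R) hk1 hdist
      obtain ⟨w, hwlim⟩ := cauchySeq_tendsto_of_complete hcauchy
      have himlim : Filter.Tendsto (fun n => (f n).im) Filter.atTop (nhds w.im) :=
        (Complex.continuous_im.tendsto w).comp hwlim
      have hwim : 0 < w.im :=
        lt_of_lt_of_le hLb0 (ge_of_tendsto himlim (Filter.Eventually.of_forall hlb))
      have hslit : w ∈ Complex.slitPlane := Complex.mem_slitPlane_iff.mpr (Or.inr hwim.ne')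
      have hlogc : ContinuousAt Complex.log w := continuousAt_clog hslit
      have hSc : ContinuousAt (Sm c₁ c₀ z) w := by
        unfold Sm
        exact (continuousAt_const.add hlogc).div_const _
      have hsim : 0 < (Sm c₁ c₀ z w).im := Sm_im_pos hc₁ hz hwim
      have hMc : ContinuousAt Mob (Sm c₁ c₀ z w) := by
        unfold Mob
        exact ContinuousAt.div (continuousAt_id.sub continuousAt_const)
          (continuousAt_id.add continuousAt_const) (ne_half _ hsim)
      have hPc : ContinuousAt P w := by
        rw [hP]
        unfold Pm
        exact hMc.comp hSc
      have h2 : Filter.Tendsto (fun n => f (n + 1)) Filter.atTop (nhds w) :=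
        hwlim.comp (Filter.tendsto_add_atTop_nat 1)
      have h3 : Filter.Tendsto (fun n => P (f n)) Filter.atTop (nhds (P w)) :=
        hPc.tendsto.comp hwlim
      have h4 : (fun n => f (n + 1)) = fun n => P (f n) := funext hsucc
      rw [h4] at h2
      have hfix : P w = w := tendsto_nhds_unique h3 h2
      have hsol := sol_of_fixed hc₁ hwim hz (by rw [← hP]; exact hfix)
      exact ⟨Sm c₁ c₀ z w, ⟨hsol.1, by rw [hsol.2]; exact hz⟩, hsol.2⟩
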